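/- Let N ≥ 2 and let φ : ℝ → ℝ be continuously differentiable with compact support contained in (0,1). Then Σ_{i=1}^{N−1} (φ̄_{i+1} − φ̄_i)² ≤ (1/N) ∫_0^1 φ'(x)² dx, where φ̄_i = N ∫_{i/N − 1/(2N)}^{i/N + 1/(2N)} φ(x) dx. -/

import Mathlib

open MeasureTheory intervalIntegral Finset

lemma cs_interval {f : ℝ → ℝ} (hf : Continuous f) {a b : ℝ} (hab : a ≤ b) :
    (∫ x in a..b, f x) ^ 2 ≤ (b - a) * ∫ x in a..b, f x ^ 2 := by
  set μ := (volume : Measure ℝ).restrict (Set.Ioc a b) with hμ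
  have hfin : IsFiniteMeasure μ := ⟨by
    rw [Measure.restrict_apply_univ]; exact measure_Ioc_lt_top⟩
  obtain ⟨C, hC⟩ : ∃ C, ∀ x ∈ Set.Icc a b, ‖f x‖ ≤ C :=
    isCompact_Icc.exists_bound_of_continuousOn hf.continuousOn
  have hmemtop : MemLp f ⊤ μ := by
    refine memLp_top_of_bound hf.aestronglyMeasurable C ?_
    filter_upwards [ae_restrict_mem measurableSet_Ioc] with x hx
    exact hC x ⟨hx.1.le, hx.2⟩
  have hmem : MemLp f (ENNReal.ofReal 2) μ := hmemtop.mono_exponent le_top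
  have hone : MemLp (fun _ : ℝ => (1 : ℝ)) (ENNReal.ofReal 2) μ := memLp_const 1
  have hpq : Real.HolderConjugate 2 2 := by constructor <;> norm_num
  have H := integral_mul_norm_le_Lp_mul_Lq hpq hmem hone
  have hA : (∫ x, ‖f x‖ ^ (2 : ℝ) ∂μ) = ∫ x in a..b, f x ^ 2 := by
    have hpt : ∀ x : ℝ, ‖f x‖ ^ (2 : ℝ) = f x ^ 2 := fun x => by
      rw [show (2:ℝ) = ((2:ℕ):ℝ) by norm_num, Real.rpow_natCast]
      simp [sq_abs]
    simp only [hpt]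
    rw [intervalIntegral.integral_of_le hab]
  have hB : (∫ _x, ‖(1 : ℝ)‖ ^ (2 : ℝ) ∂μ) = b - a := by
    simp [hμ, Real.volume_Ioc, ENNReal.toReal_ofReal (sub_nonneg.2 hab), hab]
  have hL : |∫ x in a..b, f x| ≤ ∫ x, ‖f x‖ * ‖(1 : ℝ)‖ ∂μ := by
    rw [intervalIntegral.integral_of_le hab]
    simpa using norm_integral_le_integral_norm (μ := μ) f
  have hI2 : (0:ℝ) ≤ ∫ x in a..b, f x ^ 2 :=
    intervalIntegral.integral_nonneg hab fun x _ => sq_nonneg _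
  have hkey : |∫ x in a..b, f x| ≤
      ((∫ x in a..b, f x ^ 2) ^ ((1:ℝ)/2)) * ((b - a) ^ ((1:ℝ)/2)) := by
    calc |∫ x in a..b, f x| ≤ ∫ x, ‖f x‖ * ‖(1 : ℝ)‖ ∂μ := hL
      _ ≤ (∫ x, ‖f x‖ ^ (2:ℝ) ∂μ) ^ ((1:ℝ)/2) * (∫ _x, ‖(1:ℝ)‖ ^ (2:ℝ) ∂μ) ^ ((1:ℝ)/2) := H
      _ = _ := by rw [hA, hB]
  have hsq := mul_self_le_mul_self (abs_nonneg _) hkey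
  calc (∫ x in a..b, f x) ^ 2 = |∫ x in a..b, f x| * |∫ x in a..b, f x| := by
        rw [← abs_mul, abs_mul_self]; ring
    _ ≤ (((∫ x in a..b, f x ^ 2) ^ ((1:ℝ)/2)) * ((b - a) ^ ((1:ℝ)/2))) *
        (((∫ x in a..b, f x ^ 2) ^ ((1:ℝ)/2)) * ((b - a) ^ ((1:ℝ)/2))) := hsq
    _ = ((∫ x in a..b, f x ^ 2) ^ ((1:ℝ)/2) * (∫ x in a..b, f x ^ 2) ^ ((1:ℝ)/2)) *
        ((b - a) ^ ((1:ℝ)/2) * (b - a) ^ ((1:ℝ)/2)) := by ring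
    _ = (b - a) * ∫ x in a..b, f x ^ 2 := by
        rw [← Real.rpow_add' hI2 (by norm_num), ← Real.rpow_add' (sub_nonneg.2 hab) (by norm_num)]
        norm_num
        ring

/-- The local average `φ̄_i = N ∫_{i/N - 1/(2N)}^{i/N + 1/(2N)} φ(x) dx` of `φ` over the
interval of center `i/N` and length `1/N`. -/
noncomputable def localAvg (N : ℕ) (φ : ℝ → ℝ) (i : ℕ) : ℝ :=
  (N : ℝ) * ∫ x in ((i : ℝ) / N - 1 / (2 * N))..((i : ℝ) / N + 1 / (2 * N)), φ x

/-- for `N ≥ 2` and `φ` continuously differentiable with compact support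
contained in `(0,1)`, one has `Σ_{i=1}^{N-1} (φ̄_{i+1} - φ̄_i)² ≤ (1/N) ∫₀¹ φ'(x)² dx`. -/
theorem sum_sq_localAvg_diff_le
    (N : ℕ) (hN : 2 ≤ N) (φ : ℝ → ℝ)
    (hφ : ContDiff ℝ 1 φ)
    (hsupp : tsupport φ ⊆ Set.Ioo (0 : ℝ) 1) :
    ∑ i ∈ Finset.Icc 1 (N - 1), (localAvg N φ (i + 1) - localAvg N φ i) ^ 2
      ≤ (1 / (N : ℝ)) * ∫ x in (0:ℝ)..1, (deriv φ x) ^ 2 := by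
  have hNpos : (0:ℝ) < N := by exact_mod_cast Nat.lt_of_lt_of_le two_pos hN
  have hNne : (N:ℝ) ≠ 0 := ne_of_gt hNpos
  have hN2 : (2:ℝ) ≤ (N:ℝ) := by exact_mod_cast hN
  set h : ℝ := 1 / (2 * N) with hh_def
  have hhpos : 0 < h := by positivity
  have h2h : h + h = 1 / (N:ℝ) := by rw [hh_def]; ring
  have hcφ : Continuous φ := hφ.continuous
  have hdφ : Continuous (deriv φ) := hφ.continuous_deriv le_rfl
  set ψ : ℝ → ℝ := fun x => (deriv φ x) ^ 2 with hψ_def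
  have hψc : Continuous ψ := hdφ.pow 2
  have hψ0 : ∀ x, 0 ≤ ψ x := fun x => sq_nonneg _
  have hψz : ∀ x, x ∉ Set.Ioo (0:ℝ) 1 → ψ x = 0 := by
    intro x hx
    have hd : deriv φ x = 0 := by
      by_contra hne
      exact hx (hsupp (support_deriv_subset hne))
    simp [hψ_def, hd]
  have key5 : ∀ a b : ℝ, 0 ≤ a → a ≤ 1 → a ≤ b →
      (∫ x in a..b, ψ x) ≤ ∫ x in (0:ℝ)..1, ψ x := by
    intro a b ha h1 hab
    rcases le_or_gt b 1 with hb | hb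
    · exact integral_mono_interval ha hab hb
        (Filter.Eventually.of_forall hψ0) (hψc.intervalIntegrable _ _)
    · have hsplit : (∫ x in a..b, ψ x) = (∫ x in a..1, ψ x) + ∫ x in (1:ℝ)..b, ψ x :=
        (integral_add_adjacent_intervals (hψc.intervalIntegrable _ _)
          (hψc.intervalIntegrable _ _)).symm
      have hz : (∫ x in (1:ℝ)..b, ψ x) = 0 := by
        have hzz : Set.EqOn ψ 0 (Set.uIcc (1:ℝ) b) := by
          intro x hx
          rw [Set.uIcc_of_le hb.le] at hx
          exact hψz x (fun hmem => absurd hmem.2 (not_lt.2 hx.1))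
        rw [integral_congr hzz]
        simp
      rw [hsplit, hz, add_zero]
      exact integral_mono_interval ha h1 le_rfl
        (Filter.Eventually.of_forall hψ0) (hψc.intervalIntegrable _ _)
  have ftc : ∀ a b : ℝ, (∫ u in a..b, deriv φ u) = φ b - φ a := fun a b =>
    integral_deriv_eq_sub (fun x _ => hφ.differentiable one_ne_zero x)
      (hdφ.intervalIntegrable _ _)
  set G : ℕ → ℝ → ℝ := fun i y => φ (y + ((i+1 : ℕ):ℝ) / N) - φ (y + (i:ℝ) / N) with hG_def
  set S : ℕ → ℝ → ℝ := fun i y => ∫ u in (y + (i:ℝ) / N)..(y + ((i+1 : ℕ):ℝ) / N), ψ u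
    with hS_def
  have hGcont : ∀ i, Continuous (G i) := fun i => by
    simp only [hG_def]
    exact (hcφ.comp (continuous_id.add continuous_const)).sub
      (hcφ.comp (continuous_id.add continuous_const))
  have hScont : ∀ i, Continuous (S i) := by
    intro i
    have hprim : Continuous fun x => ∫ u in (0:ℝ)..x, ψ u :=
      intervalIntegral.continuous_primitive (fun a b => hψc.intervalIntegrable a b) 0
    have hrepr : S i = fun y => (∫ u in (0:ℝ)..(y + ((i+1 : ℕ):ℝ) / N), ψ u)
        - ∫ u in (0:ℝ)..(y + (i:ℝ) / N), ψ u := by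
      funext y
      simp only [hS_def]
      rw [integral_interval_sub_left (hψc.intervalIntegrable _ _) (hψc.intervalIntegrable _ _)]
    rw [hrepr]
    exact (hprim.comp (continuous_id.add continuous_const)).sub
      (hprim.comp (continuous_id.add continuous_const))
  -- local averages as integrals over the centered window
  have shift : ∀ c : ℝ, (∫ x in (c - h)..(c + h), φ x) = ∫ y in (-h)..h, φ (y + c) := by
    intro c
    rw [integral_comp_add_right φ c]
    congr 1 <;> ring
  have hAvg : ∀ j : ℕ, localAvg N φ j = (N:ℝ) * ∫ y in (-h)..h, φ (y + (j:ℝ)/N) := by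
    intro j
    rw [localAvg, ← shift ((j:ℝ)/N), hh_def]
  have stepA : ∀ i : ℕ, localAvg N φ (i + 1) - localAvg N φ i
      = (N:ℝ) * ∫ y in (-h)..h, G i y := by
    intro i
    rw [hAvg (i+1), hAvg i, ← mul_sub, ← integral_sub
      (Continuous.intervalIntegrable (by fun_prop) _ _)
      (Continuous.intervalIntegrable (by fun_prop) _ _)]
  -- Step D: bound each squared difference
  have stepD : ∀ i : ℕ, (localAvg N φ (i + 1) - localAvg N φ i) ^ 2
      ≤ ∫ y in (-h)..h, S i y := by
    intro i
    rw [stepA i, mul_pow]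
    have hcs : (∫ y in (-h)..h, G i y) ^ 2 ≤ (h - (-h)) * ∫ y in (-h)..h, (G i y) ^ 2 :=
      cs_interval (hGcont i) (by linarith)
    have hpt : ∀ y : ℝ, (G i y) ^ 2 ≤ (1 / (N:ℝ)) * S i y := by
      intro y
      have hle : y + (i:ℝ)/N ≤ y + ((i+1 : ℕ):ℝ)/N := by
        have : (i:ℝ)/N ≤ ((i+1 : ℕ):ℝ)/N := by
          apply (div_le_div_iff_of_pos_right hNpos).mpr
          push_cast; linarith
        linarith
      have hGeq : G i y = ∫ u in (y + (i:ℝ)/N)..(y + ((i+1 : ℕ):ℝ)/N), deriv φ u := by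
        simp only [hG_def]; rw [ftc]
      rw [hGeq]
      have hcs2 := cs_interval hdφ hle
      have hlen : (y + ((i+1 : ℕ):ℝ)/N) - (y + (i:ℝ)/N) = 1 / (N:ℝ) := by
        push_cast; field_simp; ring
      rw [hlen] at hcs2
      exact hcs2
    have hmono : (∫ y in (-h)..h, (G i y) ^ 2) ≤ ∫ y in (-h)..h, (1/(N:ℝ)) * S i y := by
      apply intervalIntegral.integral_mono_on (by linarith)
        (((hGcont i).pow 2).intervalIntegrable _ _)
        ((continuous_const.mul (hScont i)).intervalIntegrable _ _)
      exact fun y _ => hpt y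
    have hconst : (∫ y in (-h)..h, (1/(N:ℝ)) * S i y) = (1/(N:ℝ)) * ∫ y in (-h)..h, S i y :=
      integral_const_mul _ _
    calc (N:ℝ)^2 * (∫ y in (-h)..h, G i y) ^ 2
        ≤ (N:ℝ)^2 * ((h - (-h)) * ∫ y in (-h)..h, (G i y)^2) := by
          apply mul_le_mul_of_nonneg_left hcs (by positivity)
      _ ≤ (N:ℝ)^2 * ((h - (-h)) * ∫ y in (-h)..h, (1/(N:ℝ)) * S i y) := by
          have hnn : (0:ℝ) ≤ h - (-h) := by linarith
          exact mul_le_mul_of_nonneg_left (mul_le_mul_of_nonneg_left hmono hnn) (by positivity)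
      _ = ∫ y in (-h)..h, S i y := by
          rw [hconst]
          have hel : h - (-h) = 1/(N:ℝ) := by rw [sub_neg_eq_add]; exact h2h
          rw [hel]
          generalize (∫ y in (-h)..h, S i y) = T
          field_simp
  -- Sum over i
  have hIcc : Finset.Icc 1 (N-1) = Finset.Ico 1 N := by
    rw [← Finset.Ico_add_one_right_eq_Icc]
    congr 1
    omega
  have hsumS : ∀ y ∈ Set.Icc (-h) h,
      (∑ i ∈ Finset.Icc 1 (N-1), S i y) ≤ ∫ x in (0:ℝ)..1, ψ x := by
    intro y hy
    have hadj : (∑ k ∈ Finset.range (N-1),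
        ∫ u in (y + ((k:ℝ)+1)/N)..(y + (((k:ℝ)+1)+1)/N), ψ u)
        = ∫ u in (y + 1/(N:ℝ))..(y + 1), ψ u := by
      have hsia := sum_integral_adjacent_intervals (μ := volume) (f := ψ)
        (a := fun k : ℕ => y + ((k:ℝ)+1)/N) (n := N-1)
        (fun k _ => hψc.intervalIntegrable _ _)
      simp only [Nat.cast_zero] at hsia
      rw [show ((0:ℝ)+1)/N = 1/(N:ℝ) by ring] at hsia
      rw [show (((N-1:ℕ):ℝ)+1)/(N:ℝ) = 1 by
        rw [Nat.cast_sub (by omega)]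
        push_cast
        field_simp; ring] at hsia
      rw [← hsia]
      apply Finset.sum_congr rfl
      intro k _
      congr 1
      push_cast
      ring
    have hsum_eq : (∑ i ∈ Finset.Icc 1 (N-1), S i y) = ∫ u in (y + 1/(N:ℝ))..(y + 1), ψ u := by
      rw [hIcc, Finset.sum_Ico_eq_sum_range, ← hadj]
      apply Finset.sum_congr rfl
      intro k _
      simp only [hS_def]
      congr 1 <;> (push_cast; ring)
    rw [hsum_eq]
    have hhle : h ≤ 1/4 := by
      rw [hh_def]
      apply one_div_le_one_div_of_le (by norm_num) (by linarith)
    have h1N : 1/(N:ℝ) = h + h := h2h.symm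
    apply key5
    · rw [h1N]; linarith [hy.1]
    · rw [h1N]; linarith [hy.1, hy.2]
    · have : 1/(N:ℝ) ≤ 1 := by
        rw [div_le_one hNpos]; linarith
      linarith
  calc ∑ i ∈ Finset.Icc 1 (N-1), (localAvg N φ (i + 1) - localAvg N φ i) ^ 2
      ≤ ∑ i ∈ Finset.Icc 1 (N-1), ∫ y in (-h)..h, S i y :=
        Finset.sum_le_sum fun i _ => stepD i
    _ = ∫ y in (-h)..h, ∑ i ∈ Finset.Icc 1 (N-1), S i y :=
        (intervalIntegral.integral_finset_sum (fun i _ => (hScont i).intervalIntegrable _ _)).symm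
    _ ≤ ∫ _y in (-h)..h, ∫ x in (0:ℝ)..1, ψ x := by
        apply intervalIntegral.integral_mono_on (by linarith)
          ((continuous_finset_sum _ fun i _ => hScont i).intervalIntegrable _ _)
          intervalIntegrable_const
        exact hsumS
    _ = (1 / (N:ℝ)) * ∫ x in (0:ℝ)..1, ψ x := by
        rw [intervalIntegral.integral_const]
        rw [smul_eq_mul, sub_neg_eq_add, h2h]
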